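/- Let c be a nice χ-coloring of a connected graph G (i.e., D_c is acyclic with a unique sink r) and let (V_1,…,V_k) be the level partition of D_c. Then for every i and every x ∈ V_i, c(x) = c(r) - i + 1 (mod χ); in particular, all vertices in the same level receive the same color. -/

import Mathlib

/-- A directed cycle: a closed walk of positive length in the digraph `D`. -/
def HasDCycle {V : Type} (D : V → V → Prop) : Prop :=
  ∃ (x : V) (l : List V), List.Chain D x (l ++ [x])

/-- `x` lies in the `i`-th level of the level partition of the (acyclic)
digraph `D`: the longest directed path starting at `x` has `i` vertices. -/
def InLevel {V : Type} (D : V → V → Prop) (x : V) (i : ℕ) : Prop :=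
  (∃ l : List V, l.Chain' D ∧ l.head? = some x ∧ l.length = i) ∧
  ¬ (∃ l : List V, l.Chain' D ∧ l.head? = some x ∧ l.length = i + 1)

/-- For a nice coloring, a vertex in level `i` has color `c r - i + 1`:
all vertices of a common level share the same color. -/
theorem nice_coloring_level_color {V : Type} [Fintype V] (G : SimpleGraph V)
    (hG : G.Connected) (χ : ℕ) (c : V → ZMod χ)
    (hc : ∀ u w, G.Adj u w → c u ≠ c w)
    (hacyc : ¬ HasDCycle (fun a b => G.Adj a b ∧ c b = c a + 1))
    (r : V) (hr : ∀ y, ¬ (G.Adj r y ∧ c y = c r + 1))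
    (hru : ∀ x, (∀ y, ¬ (G.Adj x y ∧ c y = c x + 1)) → x = r) :
    ∀ (i : ℕ) (x : V),
      InLevel (fun a b => G.Adj a b ∧ c b = c a + 1) x i →
      c x = c r - (i : ZMod χ) + 1 := by

  intro i
  induction i with
  | zero =>
    rintro x ⟨⟨l, _, hh, hl⟩, _⟩
    rw [List.length_eq_zero_iff.mp hl] at hh
    simp at hh
  | succ i ih =>
    rintro x ⟨⟨l, hch, hh, hl⟩, hmax⟩
    obtain ⟨t, rfl⟩ : ∃ t, l = x :: t := by
      cases l with
      | nil => simp at hh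
      | cons a t =>
        simp only [List.head?_cons, Option.some.injEq] at hh
        exact ⟨t, by rw [hh]⟩
    have ht : t.length = i := by simpa using hl
    cases t with
    | nil =>
      have hi : i = 0 := by simpa using ht.symm
      subst hi
      have hx : x = r := by
        apply hru
        intro y hy
        exact hmax ⟨[x, y], by simp [List.Chain', List.isChain_cons_cons, hy], rfl, rfl⟩
      subst hx
      push_cast
      ring
    | cons y t' =>
      simp only [List.Chain', List.isChain_cons_cons] at hch
      obtain ⟨hDxy, hch'⟩ := hch
      have hy : c y = c r - (i : ZMod χ) + 1 := by
        apply ih y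
        constructor
        · exact ⟨y :: t', hch', rfl, by simpa using ht⟩
        · rintro ⟨m, hm, hmh, hml⟩
          obtain ⟨rest, rfl⟩ : ∃ rest, m = y :: rest := by
            cases m with
            | nil => simp at hmh
            | cons a rest =>
              simp only [List.head?_cons, Option.some.injEq] at hmh
              exact ⟨rest, by rw [hmh]⟩
          exact hmax ⟨x :: y :: rest, List.isChain_cons_cons.mpr ⟨hDxy, hm⟩, rfl,
            by simpa using hml⟩
      have hcx : c x = c y - 1 := by rw [hDxy.2]; ring
      rw [hcx, hy]
      push_cast
      ring
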